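/- Let k ≥ 1, t ≥ 1, and n = 2k + t + 1, and let B ⊆ ℤ^n be the subgroup generated by the vectors 2(e_{2i−1} − e_{2i}) and 2(e_{2i−1} + e_{2i}) for 1 ≤ i ≤ k together with the vectors 2(e_{2k+j} − e_{2k+j+1}) for 1 ≤ j ≤ t. Then the image of the set S = {x ∈ ℤ^n : x_i ∈ {−1, 1} for all i} under the quotient map ℤ^n → ℤ^n / B has exactly 2^k (t + 2) elements. -/

import Mathlib

namespace Stmt6Aux

open Finset

def E1 (k t : ℕ) (i : Fin k) : Fin (2 * k + t + 1) := ⟨2 * (i : ℕ), by have := i.isLt; omega⟩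
def E2 (k t : ℕ) (i : Fin k) : Fin (2 * k + t + 1) := ⟨2 * (i : ℕ) + 1, by have := i.isLt; omega⟩
def E3 (k t : ℕ) (j : Fin (t + 1)) : Fin (2 * k + t + 1) := ⟨2 * k + (j : ℕ), by have := j.isLt; omega⟩

def gens (k t : ℕ) : Set (Fin (2 * k + t + 1) → ℤ) :=
  ((Set.range fun i : Fin k =>
      (2 : ℤ) • (Pi.single (⟨2 * (i : ℕ), by have := i.isLt; omega⟩ : Fin (2 * k + t + 1)) (1 : ℤ)
        - Pi.single (⟨2 * (i : ℕ) + 1, by have := i.isLt; omega⟩ : Fin (2 * k + t + 1)) (1 : ℤ))) ∪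
    (Set.range fun i : Fin k =>
      (2 : ℤ) • (Pi.single (⟨2 * (i : ℕ), by have := i.isLt; omega⟩ : Fin (2 * k + t + 1)) (1 : ℤ)
        + Pi.single (⟨2 * (i : ℕ) + 1, by have := i.isLt; omega⟩ : Fin (2 * k + t + 1)) (1 : ℤ))) ∪
    (Set.range fun j : Fin t =>
      (2 : ℤ) • (Pi.single (⟨2 * k + (j : ℕ), by have := j.isLt; linarith⟩ : Fin (2 * k + t + 1)) (1 : ℤ)
        - Pi.single (⟨2 * k + (j : ℕ) + 1, by have := j.isLt; linarith⟩ : Fin (2 * k + t + 1)) (1 : ℤ))))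

noncomputable def phi (k t : ℕ) : (Fin (2 * k + t + 1) → ℤ) →+ (Fin k → ZMod 4) × ℤ :=
  AddMonoidHom.mk'
    (fun x => (fun i => ((x (E1 k t i) - x (E2 k t i) : ℤ) : ZMod 4),
      ∑ j : Fin (t + 1), x (E3 k t j)))
    (by
      intro x y
      refine Prod.ext ?_ ?_
      · funext i
        simp only [Prod.fst_add, Pi.add_apply]
        push_cast
        ring
      · simp [Prod.snd_add, Finset.sum_add_distrib])

lemma phi_apply_fst (k t : ℕ) (x : Fin (2 * k + t + 1) → ℤ) (i : Fin k) :
    (phi k t x).1 i = ((x (E1 k t i) - x (E2 k t i) : ℤ) : ZMod 4) := rfl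

lemma phi_apply_snd (k t : ℕ) (x : Fin (2 * k + t + 1) → ℤ) :
    (phi k t x).2 = ∑ j : Fin (t + 1), x (E3 k t j) := rfl

lemma sum_delta {q : ℕ} (f : Fin q → ℤ) (s : ℕ) (hs : s < q) :
    (∑ j : Fin q, if (j : ℕ) = s then f j else 0) = f ⟨s, hs⟩ := by
  have h : (∑ j : Fin q, if j = (⟨s, hs⟩ : Fin q) then f j else 0) = f ⟨s, hs⟩ := by
    simp [Finset.sum_ite_eq']
  rw [← h]
  refine Finset.sum_congr rfl fun j _ => ?_
  simp [Fin.ext_iff]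

lemma closure_le_ker (k t : ℕ) :
    AddSubgroup.closure (gens k t) ≤ (phi k t).ker := by
  rw [AddSubgroup.closure_le]
  rintro g hg
  rw [SetLike.mem_coe, AddMonoidHom.mem_ker]
  rcases hg with ((⟨i0, rfl⟩ | ⟨i0, rfl⟩) | ⟨j0, rfl⟩)
  · have hg : ∀ (m : ℕ) (hm : m < 2 * k + t + 1),
        (((2 : ℤ) • (Pi.single (⟨2 * (i0 : ℕ), by have := i0.isLt; omega⟩ : Fin (2 * k + t + 1)) (1 : ℤ)
          - Pi.single (⟨2 * (i0 : ℕ) + 1, by have := i0.isLt; omega⟩ : Fin (2 * k + t + 1)) (1 : ℤ))) : Fin (2 * k + t + 1) → ℤ) ⟨m, hm⟩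
        = 2 * ((if m = 2 * (i0 : ℕ) then 1 else 0) - (if m = 2 * (i0 : ℕ) + 1 then 1 else 0)) := by
      intro m hm
      simp [Pi.single_apply, Fin.ext_iff]
    refine Prod.ext (funext fun i => ?_) ?_
    · rw [phi_apply_fst]
      simp only [E1, E2]
      rw [hg, hg]
      have hi := i.isLt
      have : (2 * ((if 2 * (i : ℕ) = 2 * (i0 : ℕ) then (1:ℤ) else 0) - (if 2 * (i : ℕ) = 2 * (i0 : ℕ) + 1 then 1 else 0))
          - 2 * ((if 2 * (i : ℕ) + 1 = 2 * (i0 : ℕ) then (1:ℤ) else 0) - (if 2 * (i : ℕ) + 1 = 2 * (i0 : ℕ) + 1 then 1 else 0)))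
          = if (i : ℕ) = (i0 : ℕ) then 4 else 0 := by
        split_ifs <;> omega
      rw [this]
      simp only [Prod.fst_zero, Pi.zero_apply]
      split_ifs
      · show ((4:ℤ) : ZMod 4) = 0
        decide
      · exact Int.cast_zero
    · rw [phi_apply_snd]
      refine Finset.sum_eq_zero fun j _ => ?_
      simp only [E3]
      rw [hg]
      have := i0.isLt
      have := j.isLt
      rw [if_neg (by omega), if_neg (by omega)]
      ring
  · have hg : ∀ (m : ℕ) (hm : m < 2 * k + t + 1),
        (((2 : ℤ) • (Pi.single (⟨2 * (i0 : ℕ), by have := i0.isLt; omega⟩ : Fin (2 * k + t + 1)) (1 : ℤ)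
          + Pi.single (⟨2 * (i0 : ℕ) + 1, by have := i0.isLt; omega⟩ : Fin (2 * k + t + 1)) (1 : ℤ))) : Fin (2 * k + t + 1) → ℤ) ⟨m, hm⟩
        = 2 * ((if m = 2 * (i0 : ℕ) then 1 else 0) + (if m = 2 * (i0 : ℕ) + 1 then 1 else 0)) := by
      intro m hm
      simp [Pi.single_apply, Fin.ext_iff]
    refine Prod.ext (funext fun i => ?_) ?_
    · rw [phi_apply_fst]
      simp only [E1, E2]
      rw [hg, hg]
      have hi := i.isLt
      have : (2 * ((if 2 * (i : ℕ) = 2 * (i0 : ℕ) then (1:ℤ) else 0) + (if 2 * (i : ℕ) = 2 * (i0 : ℕ) + 1 then 1 else 0))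
          - 2 * ((if 2 * (i : ℕ) + 1 = 2 * (i0 : ℕ) then (1:ℤ) else 0) + (if 2 * (i : ℕ) + 1 = 2 * (i0 : ℕ) + 1 then 1 else 0)))
          = 0 := by
        split_ifs <;> omega
      rw [this]
      simp only [Prod.fst_zero, Pi.zero_apply]
      exact Int.cast_zero
    · rw [phi_apply_snd]
      refine Finset.sum_eq_zero fun j _ => ?_
      simp only [E3]
      rw [hg]
      have := i0.isLt
      have := j.isLt
      rw [if_neg (by omega), if_neg (by omega)]
      ring
  · have hg : ∀ (m : ℕ) (hm : m < 2 * k + t + 1),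
        (((2 : ℤ) • (Pi.single (⟨2 * k + (j0 : ℕ), by have := j0.isLt; linarith⟩ : Fin (2 * k + t + 1)) (1 : ℤ)
          - Pi.single (⟨2 * k + (j0 : ℕ) + 1, by have := j0.isLt; linarith⟩ : Fin (2 * k + t + 1)) (1 : ℤ))) : Fin (2 * k + t + 1) → ℤ) ⟨m, hm⟩
        = 2 * ((if m = 2 * k + (j0 : ℕ) then 1 else 0) - (if m = 2 * k + (j0 : ℕ) + 1 then 1 else 0)) := by
      intro m hm
      simp [Pi.single_apply, Fin.ext_iff]
    refine Prod.ext (funext fun i => ?_) ?_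
    · rw [phi_apply_fst]
      simp only [E1, E2]
      rw [hg, hg]
      have hi := i.isLt
      have hj := j0.isLt
      rw [if_neg (by omega), if_neg (by omega), if_neg (by omega), if_neg (by omega)]
      simp only [Prod.fst_zero, Pi.zero_apply]
      norm_num
    · rw [phi_apply_snd]
      have hj := j0.isLt
      have key : ∀ j : Fin (t + 1),
          (((2 : ℤ) • (Pi.single (⟨2 * k + (j0 : ℕ), by have := j0.isLt; linarith⟩ : Fin (2 * k + t + 1)) (1 : ℤ)
            - Pi.single (⟨2 * k + (j0 : ℕ) + 1, by have := j0.isLt; linarith⟩ : Fin (2 * k + t + 1)) (1 : ℤ))) : Fin (2 * k + t + 1) → ℤ) (E3 k t j)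
          = (if (j : ℕ) = (j0 : ℕ) then (2:ℤ) else 0) + (if (j : ℕ) = (j0 : ℕ) + 1 then (-2:ℤ) else 0) := by
        intro j
        simp only [E3]
        rw [hg]
        split_ifs <;> omega
      rw [Finset.sum_congr rfl fun j _ => key j, Finset.sum_add_distrib,
        sum_delta (fun _ => (2:ℤ)) (j0 : ℕ) (by omega),
        sum_delta (fun _ => (-2:ℤ)) ((j0 : ℕ) + 1) (by omega)]
      simp only [Prod.snd_zero]
      ring


def G1 (k t : ℕ) (i : Fin k) : Fin (2 * k + t + 1) → ℤ :=
  (2 : ℤ) • (Pi.single (E1 k t i) 1 - Pi.single (E2 k t i) 1)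
def G2 (k t : ℕ) (i : Fin k) : Fin (2 * k + t + 1) → ℤ :=
  (2 : ℤ) • (Pi.single (E1 k t i) 1 + Pi.single (E2 k t i) 1)
def G3 (k t : ℕ) (j : Fin t) : Fin (2 * k + t + 1) → ℤ :=
  (2 : ℤ) • (Pi.single (E3 k t ⟨(j : ℕ), by have := j.isLt; omega⟩) 1
    - Pi.single (E3 k t ⟨(j : ℕ) + 1, by have := j.isLt; omega⟩) 1)

lemma G1_mem (k t : ℕ) (i : Fin k) : G1 k t i ∈ gens k t := Or.inl (Or.inl ⟨i, rfl⟩)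
lemma G2_mem (k t : ℕ) (i : Fin k) : G2 k t i ∈ gens k t := Or.inl (Or.inr ⟨i, rfl⟩)
lemma G3_mem (k t : ℕ) (j : Fin t) : G3 k t j ∈ gens k t := Or.inr ⟨j, rfl⟩

lemma G1_apply (k t : ℕ) (i : Fin k) (m : ℕ) (hm : m < 2 * k + t + 1) :
    G1 k t i ⟨m, hm⟩
      = 2 * ((if m = 2 * (i : ℕ) then (1:ℤ) else 0) - if m = 2 * (i : ℕ) + 1 then 1 else 0) := by
  simp [G1, E1, E2, Pi.single_apply, Fin.ext_iff]

lemma G2_apply (k t : ℕ) (i : Fin k) (m : ℕ) (hm : m < 2 * k + t + 1) :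
    G2 k t i ⟨m, hm⟩
      = 2 * ((if m = 2 * (i : ℕ) then (1:ℤ) else 0) + if m = 2 * (i : ℕ) + 1 then 1 else 0) := by
  simp [G2, E1, E2, Pi.single_apply, Fin.ext_iff]

lemma G3_apply (k t : ℕ) (j : Fin t) (m : ℕ) (hm : m < 2 * k + t + 1) :
    G3 k t j ⟨m, hm⟩
      = 2 * ((if m = 2 * k + (j : ℕ) then (1:ℤ) else 0) - if m = 2 * k + ((j : ℕ) + 1) then 1 else 0) := by
  simp [G3, E3, Pi.single_apply, Fin.ext_iff]

lemma sum_pm_range (q r : ℕ) (hr : r ≤ q) :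
    (∑ j ∈ Finset.range q, if j < r then (-1:ℤ) else 1) = (q:ℤ) - 2*(r:ℤ) := by
  induction q with
  | zero =>
    simp only [Finset.range_zero, Finset.sum_empty]
    have : r = 0 := by omega
    subst this
    norm_num
  | succ n ih =>
    rw [Finset.sum_range_succ]
    by_cases h : r ≤ n
    · rw [ih h, if_neg (by omega)]
      push_cast
      ring
    · have hr' : r = n + 1 := by omega
      subst hr'
      rw [if_pos (by omega)]
      rw [Finset.sum_congr rfl (fun j hj => if_pos (by simp at hj; omega))]
      rw [Finset.sum_const, Finset.card_range]
      push_cast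
      ring

lemma sum_pm (q r : ℕ) (hr : r ≤ q) :
    (∑ j : Fin q, if (j:ℕ) < r then (-1:ℤ) else 1) = (q:ℤ) - 2*(r:ℤ) := by
  rw [Fin.sum_univ_eq_sum_range (fun j => if j < r then (-1:ℤ) else 1)]
  exact sum_pm_range q r hr

set_option maxHeartbeats 2000000 in
lemma sub_mem_closure (k t : ℕ) (ht : 1 ≤ t) (x y : Fin (2*k+t+1) → ℤ)
    (hx : ∀ p, x p = 1 ∨ x p = -1) (hy : ∀ p, y p = 1 ∨ y p = -1)
    (h1 : ∀ i : Fin k, (4:ℤ) ∣ ((x (E1 k t i) - x (E2 k t i)) - (y (E1 k t i) - y (E2 k t i))))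
    (h2 : ∑ j : Fin (t+1), x (E3 k t j) = ∑ j : Fin (t+1), y (E3 k t j)) :
    x - y ∈ AddSubgroup.closure (gens k t) := by
  classical
  set d : Fin (2*k+t+1) → ℤ := x - y with hd
  have hdval : ∀ p, d p = x p - y p := fun p => rfl
  have hdc : ∀ p, d p = 0 ∨ d p = 2 ∨ d p = -2 := by
    intro p
    rcases hx p with h | h <;> rcases hy p with h' | h' <;> rw [hdval, h, h'] <;> norm_num
  have hdiff : ∀ i : Fin k, (4:ℤ) ∣ (d (E1 k t i) - d (E2 k t i)) := by
    intro i
    have heq : d (E1 k t i) - d (E2 k t i)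
        = (x (E1 k t i) - x (E2 k t i)) - (y (E1 k t i) - y (E2 k t i)) := by
      rw [hdval, hdval]; ring
    rw [heq]; exact h1 i
  have hsum4 : ∀ i : Fin k, (4:ℤ) ∣ (d (E1 k t i) + d (E2 k t i)) := by
    intro i
    have h := hdiff i
    rcases hdc (E1 k t i) with h1' | h1' | h1' <;> rcases hdc (E2 k t i) with h2' | h2' | h2' <;> omega
  set a : Fin k → ℤ := fun i => (d (E1 k t i) - d (E2 k t i)) / 4 with hadef
  set b : Fin k → ℤ := fun i => (d (E1 k t i) + d (E2 k t i)) / 4 with hbdef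
  have ha : ∀ i, 4 * a i = d (E1 k t i) - d (E2 k t i) := fun i => Int.mul_ediv_cancel' (hdiff i)
  have hb : ∀ i, 4 * b i = d (E1 k t i) + d (E2 k t i) := fun i => Int.mul_ediv_cancel' (hsum4 i)
  set P : ℕ → ℤ := fun s => ∑ l : Fin (t+1), if (l:ℕ) ≤ s then d (E3 k t l) else 0 with hPdef
  have hPdvd : ∀ s, (2:ℤ) ∣ P s := by
    intro s
    apply Finset.dvd_sum
    intro l _
    split_ifs with h
    · rcases hdc (E3 k t l) with h' | h' | h' <;> omega
    · exact dvd_zero 2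
  set c : Fin t → ℤ := fun j => P (j:ℕ) / 2 with hcdef
  have hc : ∀ j : Fin t, 2 * c j = P (j:ℕ) := fun j => Int.mul_ediv_cancel' (hPdvd (j:ℕ))
  have hP0 : P 0 = d (E3 k t ⟨0, by omega⟩) := by
    simp only [hPdef]
    rw [Finset.sum_congr rfl (fun (l : Fin (t+1)) _ =>
      (show (if (l:ℕ) ≤ 0 then d (E3 k t l) else 0) = (if (l:ℕ) = 0 then d (E3 k t l) else 0) by
        split_ifs <;> first | rfl | omega))]
    exact sum_delta (fun l => d (E3 k t l)) 0 (by omega)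
  have hPsucc : ∀ (s : ℕ) (hs : s + 1 ≤ t), P (s+1) = P s + d (E3 k t ⟨s+1, by omega⟩) := by
    intro s hs
    have key : ∀ l : Fin (t+1), (if (l:ℕ) ≤ s+1 then d (E3 k t l) else 0)
        = (if (l:ℕ) ≤ s then d (E3 k t l) else 0) + (if (l:ℕ) = s+1 then d (E3 k t l) else 0) := by
      intro l
      split_ifs <;> first | ring1 | omega
    calc P (s+1) = ∑ l : Fin (t+1), ((if (l:ℕ) ≤ s then d (E3 k t l) else 0)
          + (if (l:ℕ) = s+1 then d (E3 k t l) else 0)) :=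
        Finset.sum_congr rfl (fun l _ => key l)
      _ = P s + d (E3 k t ⟨s+1, by omega⟩) := by
        rw [Finset.sum_add_distrib, sum_delta (fun l => d (E3 k t l)) (s+1) (by omega)]
  have hPt : P t = 0 := by
    have e1 : P t = ∑ l : Fin (t+1), d (E3 k t l) :=
      Finset.sum_congr rfl (fun l _ => if_pos (by have := l.isLt; omega))
    have e2 : ∑ l : Fin (t+1), d (E3 k t l)
        = (∑ l : Fin (t+1), x (E3 k t l)) - (∑ l : Fin (t+1), y (E3 k t l)) := by
      rw [← Finset.sum_sub_distrib]
      exact Finset.sum_congr rfl fun l _ => hdval _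
    rw [e1, e2, h2, sub_self]
  set z : Fin (2*k+t+1) → ℤ := (∑ i : Fin k, a i • G1 k t i) + (∑ i : Fin k, b i • G2 k t i)
    + (∑ j : Fin t, c j • G3 k t j) with hzdef
  have hzmem : z ∈ AddSubgroup.closure (gens k t) := by
    refine add_mem (add_mem ?_ ?_) ?_
    · exact AddSubgroup.sum_mem _ fun i _ =>
        AddSubgroup.zsmul_mem _ (AddSubgroup.subset_closure (G1_mem k t i)) _
    · exact AddSubgroup.sum_mem _ fun i _ =>
        AddSubgroup.zsmul_mem _ (AddSubgroup.subset_closure (G2_mem k t i)) _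
    · exact AddSubgroup.sum_mem _ fun j _ =>
        AddSubgroup.zsmul_mem _ (AddSubgroup.subset_closure (G3_mem k t j)) _
  suffices hdz : d = z by
    rw [hdz]
    exact hzmem
  funext p
  obtain ⟨m, hm⟩ := p
  rw [hzdef]
  simp only [Pi.add_apply, Finset.sum_apply, Pi.smul_apply, smul_eq_mul,
    G1_apply, G2_apply, G3_apply]
  by_cases hmk : m < 2 * k
  · have hS3 : ∑ j : Fin t, c j * (2 * ((if m = 2 * k + (j : ℕ) then (1:ℤ) else 0)
        - if m = 2 * k + ((j : ℕ) + 1) then 1 else 0)) = 0 := by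
      refine Finset.sum_eq_zero fun j _ => ?_
      rw [if_neg (by omega), if_neg (by omega)]
      ring
    rw [hS3]
    have hs : m / 2 < k := by omega
    by_cases hpar : m % 2 = 0
    · have hms : m = 2 * (m / 2) := by omega
      have key1 : ∀ i : Fin k, a i * (2 * ((if m = 2 * (i : ℕ) then (1:ℤ) else 0)
          - if m = 2 * (i : ℕ) + 1 then 1 else 0)) = if (i:ℕ) = m / 2 then 2 * a i else 0 := by
        intro i; split_ifs <;> first | ring1 | omega
      have key2 : ∀ i : Fin k, b i * (2 * ((if m = 2 * (i : ℕ) then (1:ℤ) else 0)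
          + if m = 2 * (i : ℕ) + 1 then 1 else 0)) = if (i:ℕ) = m / 2 then 2 * b i else 0 := by
        intro i; split_ifs <;> first | ring1 | omega
      rw [Finset.sum_congr rfl (fun i _ => key1 i), Finset.sum_congr rfl (fun i _ => key2 i),
        sum_delta (fun i => 2 * a i) (m/2) hs, sum_delta (fun i => 2 * b i) (m/2) hs]
      have e1 : E1 k t ⟨m/2, hs⟩ = ⟨m, hm⟩ := by simp [E1, Fin.ext_iff]; omega
      have h4a := ha ⟨m/2, hs⟩
      have h4b := hb ⟨m/2, hs⟩
      rw [e1] at h4a h4b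
      simp only [hdval] at h4a h4b ⊢
      omega
    · have hms : m = 2 * (m / 2) + 1 := by omega
      have key1 : ∀ i : Fin k, a i * (2 * ((if m = 2 * (i : ℕ) then (1:ℤ) else 0)
          - if m = 2 * (i : ℕ) + 1 then 1 else 0)) = if (i:ℕ) = m / 2 then -(2 * a i) else 0 := by
        intro i; split_ifs <;> first | ring1 | omega
      have key2 : ∀ i : Fin k, b i * (2 * ((if m = 2 * (i : ℕ) then (1:ℤ) else 0)
          + if m = 2 * (i : ℕ) + 1 then 1 else 0)) = if (i:ℕ) = m / 2 then 2 * b i else 0 := by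
        intro i; split_ifs <;> first | ring1 | omega
      rw [Finset.sum_congr rfl (fun i _ => key1 i), Finset.sum_congr rfl (fun i _ => key2 i),
        sum_delta (fun i => -(2 * a i)) (m/2) hs, sum_delta (fun i => 2 * b i) (m/2) hs]
      have e2 : E2 k t ⟨m/2, hs⟩ = ⟨m, hm⟩ := by simp [E2, Fin.ext_iff]; omega
      have h4a := ha ⟨m/2, hs⟩
      have h4b := hb ⟨m/2, hs⟩
      rw [e2] at h4a h4b
      simp only [hdval] at h4a h4b ⊢
      omega
  · -- tail case
    have hS1 : ∑ i : Fin k, a i * (2 * ((if m = 2 * (i : ℕ) then (1:ℤ) else 0)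
        - if m = 2 * (i : ℕ) + 1 then 1 else 0)) = 0 := by
      refine Finset.sum_eq_zero fun i _ => ?_
      have := i.isLt
      rw [if_neg (by omega), if_neg (by omega)]
      ring
    have hS2 : ∑ i : Fin k, b i * (2 * ((if m = 2 * (i : ℕ) then (1:ℤ) else 0)
        + if m = 2 * (i : ℕ) + 1 then 1 else 0)) = 0 := by
      refine Finset.sum_eq_zero fun i _ => ?_
      have := i.isLt
      rw [if_neg (by omega), if_neg (by omega)]
      ring
    rw [hS1, hS2]
    by_cases hj00 : m = 2 * k
    · have key3 : ∀ j : Fin t, c j * (2 * ((if m = 2 * k + (j : ℕ) then (1:ℤ) else 0)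
          - if m = 2 * k + ((j : ℕ) + 1) then 1 else 0)) = if (j:ℕ) = 0 then 2 * c j else 0 := by
        intro j; split_ifs <;> first | ring1 | omega
      rw [Finset.sum_congr rfl (fun j _ => key3 j), sum_delta (fun j => 2 * c j) 0 (by omega)]
      have hc0 := hc ⟨0, by omega⟩
      simp only [Fin.val_mk] at hc0
      rw [hP0] at hc0
      have e3 : E3 k t ⟨0, by omega⟩ = ⟨m, hm⟩ := by simp [E3, Fin.ext_iff]; omega
      rw [e3] at hc0
      simp only [hdval] at hc0 ⊢
      omega
    · by_cases hj0t : m = 2 * k + t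
      · have key3 : ∀ j : Fin t, c j * (2 * ((if m = 2 * k + (j : ℕ) then (1:ℤ) else 0)
            - if m = 2 * k + ((j : ℕ) + 1) then 1 else 0))
            = if (j:ℕ) = t - 1 then -(2 * c j) else 0 := by
          intro j
          have := j.isLt
          split_ifs <;> first | ring1 | omega
        rw [Finset.sum_congr rfl (fun j _ => key3 j),
          sum_delta (fun j => -(2 * c j)) (t-1) (by omega)]
        have hct := hc ⟨t-1, by omega⟩
        simp only [Fin.val_mk] at hct
        have hps := hPsucc (t-1) (by omega)
        have ePP : P (t - 1 + 1) = P t := by congr 1; omega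
        have e3 : E3 k t ⟨t - 1 + 1, by omega⟩ = ⟨m, hm⟩ := by simp [E3, Fin.ext_iff]; omega
        rw [e3] at hps
        simp only [hdval] at hps ⊢
        omega
      · -- middle: 2*k < m < 2*k + t
        have hmid1 : 2 * k < m := by omega
        have hmid2 : m < 2 * k + t := by omega
        have key3 : ∀ j : Fin t, c j * (2 * ((if m = 2 * k + (j : ℕ) then (1:ℤ) else 0)
            - if m = 2 * k + ((j : ℕ) + 1) then 1 else 0))
            = (if (j:ℕ) = m - 2*k then 2 * c j else 0)
              + (if (j:ℕ) = m - 2*k - 1 then -(2 * c j) else 0) := by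
          intro j
          split_ifs <;> first | ring1 | omega
        rw [Finset.sum_congr rfl (fun j _ => key3 j), Finset.sum_add_distrib,
          sum_delta (fun j => 2 * c j) (m - 2*k) (by omega),
          sum_delta (fun j => -(2 * c j)) (m - 2*k - 1) (by omega)]
        have hcj := hc ⟨m - 2*k, by omega⟩
        have hcj' := hc ⟨m - 2*k - 1, by omega⟩
        simp only [Fin.val_mk] at hcj hcj'
        have hps := hPsucc (m - 2*k - 1) (by omega)
        have ePP : P (m - 2*k - 1 + 1) = P (m - 2*k) := by congr 1; omega
        have e3 : E3 k t ⟨m - 2*k - 1 + 1, by omega⟩ = ⟨m, hm⟩ := by simp [E3, Fin.ext_iff]; omega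
        rw [e3] at hps
        simp only [hdval] at hps ⊢
        omega

def F (k t : ℕ) (aa : (Fin k → Bool) × Fin (t+2)) : Fin (2*k+t+1) → ℤ :=
  fun p => if h : (p:ℕ) < 2*k then
      (if (p:ℕ) % 2 = 1 ∧ aa.1 ⟨(p:ℕ)/2, by omega⟩ = true then -1 else 1)
    else (if (p:ℕ) - 2*k < (aa.2:ℕ) then -1 else 1)

lemma F_mem (k t : ℕ) (aa : (Fin k → Bool) × Fin (t+2)) :
    ∀ p, F k t aa p = 1 ∨ F k t aa p = -1 := by
  intro p
  unfold F
  split_ifs <;> simp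

lemma F_apply (k t : ℕ) (aa : (Fin k → Bool) × Fin (t+2)) (m : ℕ) (hm : m < 2*k+t+1) :
    F k t aa ⟨m, hm⟩ = if h : m < 2*k then
      (if m % 2 = 1 ∧ aa.1 ⟨m/2, by omega⟩ = true then -1 else 1)
    else (if m - 2*k < (aa.2:ℕ) then -1 else 1) := rfl

lemma F_E1 (k t : ℕ) (aa : (Fin k → Bool) × Fin (t+2)) (i : Fin k) :
    F k t aa (E1 k t i) = 1 := by
  have hik := i.isLt
  simp only [E1]
  rw [F_apply, dif_pos (by omega), if_neg (by rintro ⟨h1, -⟩; omega)]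

lemma F_E2 (k t : ℕ) (aa : (Fin k → Bool) × Fin (t+2)) (i : Fin k) :
    F k t aa (E2 k t i) = if aa.1 i then -1 else 1 := by
  have hik := i.isLt
  simp only [E2]
  rw [F_apply, dif_pos (by omega)]
  have hfin : (⟨(2*(i:ℕ)+1)/2, by omega⟩ : Fin k) = i := by
    apply Fin.ext
    simp
    omega
  have hmod : (2*(i:ℕ)+1) % 2 = 1 := by omega
  rw [hmod, hfin]
  simp

lemma F_E3 (k t : ℕ) (aa : (Fin k → Bool) × Fin (t+2)) (j : Fin (t+1)) :
    F k t aa (E3 k t j) = if (j:ℕ) < (aa.2:ℕ) then -1 else 1 := by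
  have hjt := j.isLt
  simp only [E3]
  rw [F_apply, dif_neg (by omega), show 2*k + (j:ℕ) - 2*k = (j:ℕ) from by omega]

lemma phi_F (k t : ℕ) (aa : (Fin k → Bool) × Fin (t+2)) :
    phi k t (F k t aa)
      = (fun i => if aa.1 i then (2 : ZMod 4) else 0, ((t:ℤ)+1) - 2*((aa.2:ℕ):ℤ)) := by
  refine Prod.ext (funext fun i => ?_) ?_
  · rw [phi_apply_fst, F_E1, F_E2]
    show ((1 - if aa.1 i then (-1:ℤ) else 1 : ℤ) : ZMod 4) = if aa.1 i then (2:ZMod 4) else 0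
    by_cases h : aa.1 i <;> simp [h] <;> push_cast <;> norm_num
  · rw [phi_apply_snd]
    show _ = ((t:ℤ)+1) - 2*((aa.2:ℕ):ℤ)
    have hle : (aa.2:ℕ) ≤ t + 1 := by have := aa.2.isLt; omega
    calc (∑ j : Fin (t+1), F k t aa (E3 k t j))
        = ∑ j : Fin (t+1), (if (j:ℕ) < (aa.2:ℕ) then (-1:ℤ) else 1) :=
          Finset.sum_congr rfl fun j _ => F_E3 k t aa j
      _ = ((t+1 : ℕ) : ℤ) - 2*((aa.2:ℕ):ℤ) := sum_pm (t+1) (aa.2:ℕ) hle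
      _ = ((t:ℤ)+1) - 2*((aa.2:ℕ):ℤ) := by push_cast; ring

end Stmt6Aux

open Stmt6Aux in
/-- Coset counting: for `n = 2k+t+1` and `B ⊆ ℤ^n` the subgroup generated by
`2(e_{2i−1} − e_{2i})`, `2(e_{2i−1} + e_{2i})` for `1 ≤ i ≤ k` and
`2(e_{2k+j} − e_{2k+j+1})` for `1 ≤ j ≤ t`, the image of the set of
`±1`-vectors in `ℤ^n / B` has exactly `2^k (t+2)` elements. -/
theorem stmt_6 (k t : ℕ) (hk : 1 ≤ k) (ht : 1 ≤ t)
    (B : AddSubgroup (Fin (2 * k + t + 1) → ℤ))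
    (hB : B = AddSubgroup.closure
      ((Set.range fun i : Fin k =>
          (2 : ℤ) • (Pi.single (⟨2 * (i : ℕ), by have := i.isLt; omega⟩ : Fin (2 * k + t + 1)) (1 : ℤ)
            - Pi.single (⟨2 * (i : ℕ) + 1, by have := i.isLt; omega⟩ : Fin (2 * k + t + 1)) (1 : ℤ))) ∪
        (Set.range fun i : Fin k =>
          (2 : ℤ) • (Pi.single (⟨2 * (i : ℕ), by have := i.isLt; omega⟩ : Fin (2 * k + t + 1)) (1 : ℤ)
            + Pi.single (⟨2 * (i : ℕ) + 1, by have := i.isLt; omega⟩ : Fin (2 * k + t + 1)) (1 : ℤ))) ∪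
        (Set.range fun j : Fin t =>
          (2 : ℤ) • (Pi.single (⟨2 * k + (j : ℕ), by have := j.isLt; omega⟩ : Fin (2 * k + t + 1)) (1 : ℤ)
            - Pi.single (⟨2 * k + (j : ℕ) + 1, by have := j.isLt; omega⟩ : Fin (2 * k + t + 1)) (1 : ℤ))))) :
    Set.ncard
      ((fun x : Fin (2 * k + t + 1) → ℤ =>
          (QuotientAddGroup.mk x : (Fin (2 * k + t + 1) → ℤ) ⧸ B)) ''
        {x : Fin (2 * k + t + 1) → ℤ | ∀ i, x i = 1 ∨ x i = -1}) = 2 ^ k * (t + 2) := by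
  classical
  have hB' : B = AddSubgroup.closure (gens k t) := hB
  have hker : AddSubgroup.closure (gens k t) ≤ (phi k t).ker := closure_le_ker k t
  have hsub : ∀ x y : Fin (2 * k + t + 1) → ℤ, (∀ p, x p = 1 ∨ x p = -1) →
      (∀ p, y p = 1 ∨ y p = -1) → phi k t x = phi k t y →
      (QuotientAddGroup.mk x : (Fin (2 * k + t + 1) → ℤ) ⧸ B) = QuotientAddGroup.mk y := by
    intro x y hx hy hphi
    rw [QuotientAddGroup.eq_iff_sub_mem, hB']
    apply sub_mem_closure k t ht x y hx hy
    · intro i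
      have h := congrFun (congrArg Prod.fst hphi) i
      rw [phi_apply_fst, phi_apply_fst] at h
      have h0 : (((x (E1 k t i) - x (E2 k t i)) - (y (E1 k t i) - y (E2 k t i)) : ℤ) : ZMod 4) = 0 := by
        push_cast
        rw [sub_eq_zero]
        exact_mod_cast h
      exact_mod_cast (ZMod.intCast_zmod_eq_zero_iff_dvd _ 4).mp h0
    · have h := congrArg Prod.snd hphi
      rw [phi_apply_snd, phi_apply_snd] at h
      exact h
  have himg : ((fun x : Fin (2 * k + t + 1) → ℤ =>
          (QuotientAddGroup.mk x : (Fin (2 * k + t + 1) → ℤ) ⧸ B)) ''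
        {x : Fin (2 * k + t + 1) → ℤ | ∀ i, x i = 1 ∨ x i = -1})
      = Set.range (fun aa : (Fin k → Bool) × Fin (t + 2) =>
          (QuotientAddGroup.mk (F k t aa) : (Fin (2 * k + t + 1) → ℤ) ⧸ B)) := by
    apply Set.Subset.antisymm
    · rintro q ⟨x, hxS, rfl⟩
      have hxS' : ∀ p, x p = 1 ∨ x p = -1 := hxS
      set r : ℕ := (Finset.univ.filter (fun j : Fin (t + 1) => x (E3 k t j) = -1)).card with hr
      have hrle : r ≤ t + 1 := by
        calc r ≤ Finset.univ.card := Finset.card_filter_le _ _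
          _ = t + 1 := by simp
      refine ⟨(fun i => decide (x (E1 k t i) ≠ x (E2 k t i)), ⟨r, by omega⟩), ?_⟩
      refine hsub _ _ (F_mem k t _) hxS' ?_
      rw [phi_F]
      refine Prod.ext (funext fun i => ?_) ?_
      · rw [phi_apply_fst]
        rcases hxS' (E1 k t i) with h1 | h1 <;> rcases hxS' (E2 k t i) with h2 | h2 <;>
          simp [h1, h2] <;> decide
      · rw [phi_apply_snd]
        show ((t:ℤ)+1) - 2*(((⟨r, by omega⟩ : Fin (t+2)):ℕ):ℤ) = _
        have key : ∀ j : Fin (t + 1),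
            x (E3 k t j) = 1 - 2 * (if x (E3 k t j) = -1 then (1:ℤ) else 0) := by
          intro j
          rcases hxS' (E3 k t j) with h | h <;> rw [h] <;> norm_num
        rw [Finset.sum_congr rfl (fun j _ => key j), Finset.sum_sub_distrib,
          Finset.sum_const, ← Finset.mul_sum, Finset.sum_boole]
        simp only [Fin.val_mk, ← hr, Finset.card_univ, Fintype.card_fin, nsmul_eq_mul, mul_one]
        push_cast
        ring
    · rintro q ⟨aa, rfl⟩
      exact ⟨F k t aa, F_mem k t aa, rfl⟩
  have hinj : Function.Injective (fun aa : (Fin k → Bool) × Fin (t + 2) =>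
      (QuotientAddGroup.mk (F k t aa) : (Fin (2 * k + t + 1) → ℤ) ⧸ B)) := by
    intro aa bb h
    have hmem : F k t aa - F k t bb ∈ B := QuotientAddGroup.eq_iff_sub_mem.mp h
    rw [hB'] at hmem
    have hker' := hker hmem
    have hphi : phi k t (F k t aa) = phi k t (F k t bb) := by
      have h0 := AddMonoidHom.mem_ker.mp hker'
      rw [map_sub, sub_eq_zero] at h0
      exact h0
    rw [phi_F, phi_F] at hphi
    have h1 := congrArg Prod.fst hphi
    have h2 := congrArg Prod.snd hphi
    simp only at h1 h2
    refine Prod.ext ?_ ?_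
    · funext i
      have hi := congrFun h1 i
      by_cases ha : aa.1 i <;> by_cases hb : bb.1 i <;>
        simp only [ha, hb, if_true, if_false, if_pos, if_neg] at hi ⊢ <;>
        first
          | rfl
          | (exact absurd hi (by decide))
    · have hval : (aa.2 : ℕ) = (bb.2 : ℕ) := by omega
      exact Fin.ext hval
  rw [himg, ← Set.image_univ, Set.ncard_image_of_injective _ hinj, Set.ncard_univ]
  simp [Nat.card_eq_fintype_card]
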